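/- Let W = (ω_1,…,ω_n) be a suitable basis of A with eW′ = MW, let U be an integral basis of A, and let T ∈ K[x]^{n×n} be such that W = TU. Let h = Σ_{i=1}^n (h_i/(de)) ω_i with h_i, d ∈ K[x], gcd(d, e) = 1, gcd(h_1,…,h_n, d) = 1, and d squarefree. If h is integrable in A, say h = (Σ_{i=1}^n (q_i/u) ω_i)′ with u, q_1,…,q_n ∈ K[x] and gcd(q_1,…,q_n, u) = 1, then u divides det(T); hence u² divides the polynomial Disc(W)/Disc(U). -/

import Mathlib

noncomputable section
open scoped Classical

open Polynomial

/-- Termwise derivative (w.r.t. `x`) of a generalized (Hahn/Puiseux) series in `x - a`: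
the exponent-`q` coefficient of `P'` is `(q+1)` times the exponent-`(q+1)` coefficient of `P`. -/
def hderiv {F : Type} [Field F] (P : HahnSeries ℚ F) : HahnSeries ℚ F where
  coeff q := ((q + 1 : ℚ) : F) * P.coeff (q + 1)
  isPWO_support' := by
    have hsub : (Function.support fun q : ℚ => ((q + 1 : ℚ) : F) * P.coeff (q + 1))
        ⊆ (fun q : ℚ => q - 1) '' P.support := by
      intro q hq
      refine ⟨q + 1, ?_, by ring⟩
      intro h0
      simp [Function.mem_support, h0] at hq
    exact (P.isPWO_support.image_of_monotoneOn
      (fun x _ y _ hxy => by simpa using hxy)).mono hsub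

/-- The valuation of a generalized (Hahn/Puiseux) series: the least exponent occurring,
and `⊤` for the zero series. -/
def hval {F : Type} [Field F] (P : HahnSeries ℚ F) : WithTop ℚ :=
  if h : P = 0 then ⊤
  else ((P.isWF_support.min (HahnSeries.support_nonempty_iff.mpr h) : ℚ) : WithTop ℚ)

/-- A series is ramified if some exponent in its support is not an integer. -/
def Ramified {F : Type} [Field F] (P : HahnSeries ℚ F) : Prop :=
  ∃ q ∈ P.support, ∀ z : ℤ, (z : ℚ) ≠ q

/-- The set of fractional (non-integer) exponents occurring in a series. -/
def fracSupport {F : Type} [Field F] (P : HahnSeries ℚ F) : Set ℚ :=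
  {q | q ∈ P.support ∧ ∀ z : ℤ, (z : ℚ) ≠ q}

/-- The minimal fractional exponent `δ(P)` of a series; `⊤` if `P` is not ramified. -/
def delta {F : Type} [Field F] (P : HahnSeries ℚ F) : WithTop ℚ :=
  if h : (fracSupport P).Nonempty then
    (((P.isWF_support.mono (fun q hq => hq.1)).min h : ℚ) : WithTop ℚ)
  else ⊤

/-- A Hahn series over `ℚ` is a Puiseux series if its exponents have a common denominator. -/
def IsPuiseux {F : Type} [Field F] (P : HahnSeries ℚ F) : Prop :=
  ∃ r : ℕ, 0 < r ∧ ∀ q ∈ P.support, ∃ z : ℤ, (z : ℚ) / r = q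

/-! ### The algebraic function field `A = K(x)[y]/⟨m⟩` -/

/-- The canonical image in `A = K(x)[y]/⟨m⟩` of a polynomial `p ∈ K[x]`. -/
def toA {K : Type} [Field K] (m : Polynomial (RatFunc K)) (p : Polynomial K) :
    AdjoinRoot m :=
  algebraMap (RatFunc K) (AdjoinRoot m) (algebraMap (Polynomial K) (RatFunc K) p)

/-- `D` is the derivation on `A = K(x)[y]/⟨m⟩` extending `d/dx` on `K(x)`:
it is additive, satisfies the Leibniz rule, and restricts to `d/dx` on `K[x]`
(hence, being a derivation on a field, on all of `K(x)`). -/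
structure IsDerivationOnA {K : Type} [Field K] (m : Polynomial (RatFunc K))
    (D : AdjoinRoot m → AdjoinRoot m) : Prop where
  map_add : ∀ f g, D (f + g) = D f + D g
  leibniz : ∀ f g, D (f * g) = f * D g + g * D f
  map_poly : ∀ p : Polynomial K, D (toA m p) = toA m (Polynomial.derivative p)

/-- `W` is a basis of `A` as a vector space over `K(x)`. -/
def IsKxBasis {K : Type} [Field K] {m : Polynomial (RatFunc K)}
    (W : Fin m.natDegree → AdjoinRoot m) : Prop :=
  LinearIndependent (RatFunc K) W ∧ Submodule.span (RatFunc K) (Set.range W) = ⊤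

/-- `e W′ = M W` componentwise. -/
def DerivRel {K : Type} [Field K] {m : Polynomial (RatFunc K)}
    (D : AdjoinRoot m → AdjoinRoot m) (W : Fin m.natDegree → AdjoinRoot m)
    (e : Polynomial K) (M : Matrix (Fin m.natDegree) (Fin m.natDegree) (Polynomial K)) : Prop :=
  ∀ i, toA m e * D (W i) = ∑ j, toA m (M i j) * W j

/-- `gcd(e, m₁₁, …, mₙₙ) = 1`: the only common divisors of `e` and the entries of `M`
are units. -/
def GcdOne {K : Type} [Field K] {n : ℕ}
    (e : Polynomial K) (M : Matrix (Fin n) (Fin n) (Polynomial K)) : Prop :=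
  ∀ p : Polynomial K, p ∣ e → (∀ i j, p ∣ M i j) → IsUnit p

/-! ### Puiseux expansions around a point `a` of the algebraic closure -/

/-- The family of the `n` distinct `K(x)`-embeddings of `A = K(x)[y]/⟨m⟩` into the field of
Puiseux series around a point `a`: each embedding is a ring homomorphism into the Hahn series
field whose values are Puiseux series, sending constants `c ∈ K` to constant series and the
rational function `x` to `a + (x - a)`, i.e. to the series `a + t` where `t` stands
for `x - a`. -/
structure EmbFamily (K F : Type) [Field K] [Field F] [Algebra K F]
    (m : Polynomial (RatFunc K)) (a : F) where
  emb : Fin m.natDegree → (AdjoinRoot m →+* HahnSeries ℚ F)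
  emb_injective : Function.Injective emb
  emb_C : ∀ i (c : K), emb i (toA m (Polynomial.C c)) = HahnSeries.single 0 (algebraMap K F c)
  emb_X : ∀ i, emb i (toA m Polynomial.X) =
    HahnSeries.single 0 a + HahnSeries.single 1 1
  emb_puiseux : ∀ i f, IsPuiseux (emb i f)

/-- The embeddings around `a` are differential homomorphisms: they intertwine the derivation
`D` on `A` with the termwise derivative of series. -/
def IsDiffFamily {K F : Type} [Field K] [Field F] [Algebra K F]
    {m : Polynomial (RatFunc K)} {a : F} (D : AdjoinRoot m → AdjoinRoot m)
    (σ : EmbFamily K F m a) : Prop :=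
  ∀ i f, σ.emb i (D f) = hderiv (σ.emb i f)

/-- `f ∈ A` is locally integral at `a`, i.e. `val_a(f) ≥ 0`: all Puiseux series associated
to `f` around `a` have nonnegative valuation. -/
def LocIntegralAt {K F : Type} [Field K] [Field F] [Algebra K F]
    {m : Polynomial (RatFunc K)} {a : F} (σ : EmbFamily K F m a)
    (f : AdjoinRoot m) : Prop :=
  ∀ i, 0 ≤ hval (σ.emb i f)

/-- `a` is a branch point of `f ∈ A`: one of the Puiseux series associated to `f` around `a`
is ramified. -/
def IsBranchPointOf {K F : Type} [Field K] [Field F] [Algebra K F]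
    {m : Polynomial (RatFunc K)} {a : F} (σ : EmbFamily K F m a)
    (f : AdjoinRoot m) : Prop :=
  ∃ i, Ramified (σ.emb i f)

/-- `f ∈ A` is (globally) integral: locally integral at every point `a` of the algebraic
closure of `K` (given the system `σ` of Puiseux expansions around each point). -/
def IntegralElem {K : Type} [Field K] {m : Polynomial (RatFunc K)}
    (σ : ∀ a : AlgebraicClosure K, EmbFamily K (AlgebraicClosure K) m a)
    (f : AdjoinRoot m) : Prop :=
  ∀ a, LocIntegralAt (σ a) f

/-- `W` is an integral basis of `A`: a `K(x)`-vector-space basis consisting of integral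
elements such that every integral element is a `K[x]`-linear combination of `W`. -/
def IsIntegralBasis {K : Type} [Field K] {m : Polynomial (RatFunc K)}
    (σ : ∀ a : AlgebraicClosure K, EmbFamily K (AlgebraicClosure K) m a)
    (W : Fin m.natDegree → AdjoinRoot m) : Prop :=
  IsKxBasis W ∧ (∀ i, IntegralElem σ (W i)) ∧
    ∀ f, IntegralElem σ f → ∃ c : Fin m.natDegree → Polynomial K,
      f = ∑ i, toA m (c i) * W i

/-- The rational function `r ∈ K(x)` has no pole at `a`: `r = p/q` with `q(a) ≠ 0`. -/
def NoPoleAt {K F : Type} [Field K] [Field F] [Algebra K F] (a : F) (r : RatFunc K) : Prop :=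
  ∃ p q : Polynomial K, Polynomial.aeval a q ≠ 0 ∧
    r * algebraMap (Polynomial K) (RatFunc K) q = algebraMap (Polynomial K) (RatFunc K) p

/-- `W` is a local integral basis of `A` at `a`: a `K(x)`-vector-space basis consisting of
elements that are locally integral at `a`, such that every element of `A` that is locally
integral at `a` is a linear combination of `W` with coefficients in `K(x)_a` (rational
functions without a pole at `a`). -/
def IsLocalIntegralBasisAt {K F : Type} [Field K] [Field F] [Algebra K F]
    {m : Polynomial (RatFunc K)} {a : F} (σ : EmbFamily K F m a)
    (W : Fin m.natDegree → AdjoinRoot m) : Prop :=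
  IsKxBasis W ∧ (∀ i, LocIntegralAt σ (W i)) ∧
    ∀ f, LocIntegralAt σ f → ∃ c : Fin m.natDegree → RatFunc K,
      (∀ i, NoPoleAt a (c i)) ∧ f = ∑ i, algebraMap (RatFunc K) (AdjoinRoot m) (c i) * W i
/-! ### Auxiliary lemmas -/

section HahnAux

variable {F : Type} [Field F]

lemma hval_eq_orderTop (P : HahnSeries ℚ F) : hval P = P.orderTop := by
  by_cases h : P = 0
  · simp [hval, h]
  · rw [hval, dif_neg h, HahnSeries.orderTop_of_ne_zero h]

lemma le_orderTop_of_forall {P : HahnSeries ℚ F} {c : ℚ}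
    (h : ∀ q ∈ P.support, c ≤ q) : (c : WithTop ℚ) ≤ P.orderTop := by
  by_cases h0 : P = 0
  · simp [h0]
  · rw [HahnSeries.orderTop_of_ne_zero h0]
    exact_mod_cast h _ (P.isWF_support.min_mem _)

lemma le_orderTop_sum {ι : Type*} (s : Finset ι) (f : ι → HahnSeries ℚ F) {c : WithTop ℚ}
    (h : ∀ i ∈ s, c ≤ (f i).orderTop) : c ≤ (∑ i ∈ s, f i).orderTop := by
  classical
  induction s using Finset.cons_induction with
  | empty => simp
  | cons a s ha ih =>
    rw [Finset.sum_cons]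
    refine le_trans (le_min (h a (Finset.mem_cons_self a s))
      (ih fun i hi => h i (Finset.mem_cons_of_mem hi))) ?_
    exact HahnSeries.min_orderTop_le_orderTop_add

lemma coeff_finsum {ι : Type*} (s : Finset ι) (f : ι → HahnSeries ℚ F) (q : ℚ) :
    (∑ i ∈ s, f i).coeff q = ∑ i ∈ s, (f i).coeff q :=
  map_sum (HahnSeries.coeff.addMonoidHom q) f s

lemma orderTop_mul' {x y : HahnSeries ℚ F} (hx : x ≠ 0) (hy : y ≠ 0) :
    (x * y).orderTop = x.orderTop + y.orderTop := by
  have hxy : x * y ≠ 0 := mul_ne_zero hx hy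
  exact HahnSeries.orderTop_mul x y

/-- The series of a polynomial `p ∈ F[x]`, expanded around `a` (Taylor expansion). -/
def polySeries (a : F) (p : Polynomial F) : HahnSeries ℚ F :=
  (Polynomial.taylor a p).sum fun k c => HahnSeries.single (k : ℚ) c

lemma polySeries_coeff (a : F) (p : Polynomial F) (k : ℕ) :
    (polySeries a p).coeff (k : ℚ) = (Polynomial.taylor a p).coeff k := by
  classical
  rw [polySeries, Polynomial.sum_def, coeff_finsum]
  simp only [HahnSeries.coeff_single, Nat.cast_inj]
  rw [Finset.sum_ite_eq (Polynomial.taylor a p).support k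
    (fun j => (Polynomial.taylor a p).coeff j)]
  split
  · rfl
  · next hk => exact (Polynomial.notMem_support_iff.mp hk).symm

lemma polySeries_coeff_of_neg (a : F) (p : Polynomial F) {q : ℚ} (hq : q < 0) :
    (polySeries a p).coeff q = 0 := by
  classical
  rw [polySeries, Polynomial.sum_def, coeff_finsum]
  refine Finset.sum_eq_zero fun j _ => ?_
  rw [HahnSeries.coeff_single, if_neg]
  intro hq'
  rw [hq'] at hq
  exact (not_lt.mpr (Nat.cast_nonneg j)) hq

lemma polySeries_orderTop_nonneg (a : F) (p : Polynomial F) :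
    0 ≤ (polySeries a p).orderTop := by
  have := le_orderTop_of_forall (P := polySeries a p) (c := 0) ?_
  · simpa using this
  · intro q hq
    by_contra hlt
    exact hq (polySeries_coeff_of_neg a p (not_le.mp hlt))

lemma eval₂_eq_polySeries (a : F) (p : Polynomial F) :
    Polynomial.eval₂ (HahnSeries.C : F →+* HahnSeries ℚ F)
      (HahnSeries.single 0 a + HahnSeries.single 1 1) p = polySeries a p := by
  conv_lhs => rw [← Polynomial.sum_taylor_eq p a]
  rw [polySeries, Polynomial.sum_def, Polynomial.sum_def, Polynomial.eval₂_finset_sum]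
  refine Finset.sum_congr rfl fun k _ => ?_
  rw [Polynomial.eval₂_mul, Polynomial.eval₂_C, Polynomial.eval₂_pow, Polynomial.eval₂_sub,
    Polynomial.eval₂_X, Polynomial.eval₂_C]
  have hCa : (HahnSeries.C : F →+* HahnSeries ℚ F) a = HahnSeries.single 0 a := rfl
  rw [hCa, add_sub_cancel_left, HahnSeries.single_pow]
  have h1 : (HahnSeries.C : F →+* HahnSeries ℚ F) ((Polynomial.taylor a p).coeff k)
      = HahnSeries.single 0 ((Polynomial.taylor a p).coeff k) := rfl
  rw [h1, HahnSeries.single_mul_single, zero_add, one_pow, mul_one]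
  norm_num

end HahnAux

section EmbAux

variable {K F : Type} [Field K] [Field F] [Algebra K F]
variable {m : Polynomial (RatFunc K)} {a : F}

lemma emb_toA (σ : EmbFamily K F m a) (i : Fin m.natDegree) (p : Polynomial K) :
    σ.emb i (toA m p) = polySeries a (p.map (algebraMap K F)) := by
  have key : (σ.emb i).comp (((algebraMap (RatFunc K) (AdjoinRoot m)).comp
      (algebraMap (Polynomial K) (RatFunc K)))) =
      Polynomial.eval₂RingHom ((HahnSeries.C : F →+* HahnSeries ℚ F).comp (algebraMap K F))
        (HahnSeries.single 0 a + HahnSeries.single 1 1) := by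
    apply Polynomial.ringHom_ext
    · intro c
      have := σ.emb_C i c
      simpa [toA] using this
    · have := σ.emb_X i
      simpa [toA] using this
  have h1 : σ.emb i (toA m p) = Polynomial.eval₂
      ((HahnSeries.C : F →+* HahnSeries ℚ F).comp (algebraMap K F))
      (HahnSeries.single 0 a + HahnSeries.single 1 1) p := by
    have := congrArg (fun φ => φ p) key
    simpa [toA] using this
  rw [h1, ← Polynomial.eval₂_map, eval₂_eq_polySeries]

lemma orderTop_emb_toA_nonneg (σ : EmbFamily K F m a) (i : Fin m.natDegree) (p : Polynomial K) :
    0 ≤ (σ.emb i (toA m p)).orderTop := by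
  rw [emb_toA]
  exact polySeries_orderTop_nonneg _ _

lemma emb_toA_coeff_zero (σ : EmbFamily K F m a) (i : Fin m.natDegree) (p : Polynomial K) :
    (σ.emb i (toA m p)).coeff 0 = Polynomial.aeval a p := by
  rw [emb_toA]
  have h0 : ((0 : ℕ) : ℚ) = 0 := by norm_num
  rw [← h0, polySeries_coeff, Polynomial.taylor_coeff_zero, Polynomial.eval_map,
    Polynomial.aeval_def]

lemma emb_toA_coeff_one (σ : EmbFamily K F m a) (i : Fin m.natDegree) (p : Polynomial K) :
    (σ.emb i (toA m p)).coeff 1 = Polynomial.aeval a (Polynomial.derivative p) := by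
  rw [emb_toA]
  have h0 : ((1 : ℕ) : ℚ) = 1 := by norm_num
  rw [← h0, polySeries_coeff, Polynomial.taylor_coeff_one, Polynomial.derivative_map,
    Polynomial.eval_map, Polynomial.aeval_def]

lemma orderTop_emb_toA_eq_zero (σ : EmbFamily K F m a) (i : Fin m.natDegree)
    {p : Polynomial K} (hp : Polynomial.aeval a p ≠ 0) :
    (σ.emb i (toA m p)).orderTop = 0 := by
  refine le_antisymm ?_ (orderTop_emb_toA_nonneg σ i p)
  have : (σ.emb i (toA m p)).coeff 0 ≠ 0 := by rw [emb_toA_coeff_zero]; exact hp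
  have h := HahnSeries.orderTop_le_of_coeff_ne_zero this
  exact_mod_cast h

lemma orderTop_emb_toA_le_one [CharZero K] (σ : EmbFamily K F m a) (i : Fin m.natDegree)
    {p : Polynomial K} (hp : Squarefree p) :
    (σ.emb i (toA m p)).orderTop ≤ 1 := by
  by_cases h0 : Polynomial.aeval a p = 0
  · have hsep : p.Separable := PerfectField.separable_iff_squarefree.mpr hp
    have hcop : IsCoprime (Polynomial.aeval a p)
        (Polynomial.aeval a (Polynomial.derivative p)) :=
      IsCoprime.map hsep ((Polynomial.aeval a : Polynomial K →ₐ[K] F) : Polynomial K →+* F)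
    have hd : Polynomial.aeval a (Polynomial.derivative p) ≠ 0 := by
      intro hd0
      rw [h0, hd0] at hcop
      exact not_isUnit_zero (isCoprime_zero_left.mp hcop)
    have : (σ.emb i (toA m p)).coeff 1 ≠ 0 := by rw [emb_toA_coeff_one]; exact hd
    have h := HahnSeries.orderTop_le_of_coeff_ne_zero this
    exact_mod_cast h
  · rw [orderTop_emb_toA_eq_zero σ i h0]
    norm_num

lemma orderTop_emb_add_le_one [CharZero K] (σ : EmbFamily K F m a) (i : Fin m.natDegree)
    {d e : Polynomial K} (hd : Squarefree d) (he : Squarefree e) (hde : IsCoprime d e) :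
    (σ.emb i (toA m d)).orderTop + (σ.emb i (toA m e)).orderTop ≤ 1 := by
  have hcop : IsCoprime (Polynomial.aeval a d) (Polynomial.aeval a e) :=
    hde.map ((Polynomial.aeval a : Polynomial K →ₐ[K] F) : Polynomial K →+* F)
  by_cases h0 : Polynomial.aeval a d = 0
  · have he0 : Polynomial.aeval a e ≠ 0 := by
      intro he0
      rw [h0, he0] at hcop
      exact not_isUnit_zero (isCoprime_zero_left.mp hcop)
    rw [orderTop_emb_toA_eq_zero σ i he0, add_zero]
    exact orderTop_emb_toA_le_one σ i hd
  · rw [orderTop_emb_toA_eq_zero σ i h0, zero_add]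
    exact orderTop_emb_toA_le_one σ i he

end EmbAux
set_option synthInstance.maxHeartbeats 1000000 in
set_option maxHeartbeats 1000000 in

/-- Let `W` be a suitable basis of `A` with `eW′ = MW`, let `U` be an integral
basis of `A`, and let `T ∈ K[x]^{n×n}` be such that `W = TU`. Let `h = Σ (h_i/(de)) ω_i`
with `gcd(d, e) = 1`, `gcd(h₁,…,hₙ, d) = 1`, and `d` squarefree. If `h` is integrable in
`A`, say `h = (Σ (q_i/u) ω_i)′` with `gcd(q₁,…,qₙ, u) = 1`, then `u` divides `det(T)`;
hence `u²` divides the polynomial `Disc(W)/Disc(U)`. -/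
theorem u_divides_detT {K : Type} [Field K] [CharZero K]
    (m : Polynomial (RatFunc K)) [Fact (Irreducible m)]
    (D : AdjoinRoot m → AdjoinRoot m) (hD : IsDerivationOnA m D)
    (σ : ∀ a : AlgebraicClosure K, EmbFamily K (AlgebraicClosure K) m a)
    (hσ : ∀ a, IsDiffFamily D (σ a))
    (W U : Fin m.natDegree → AdjoinRoot m)
    (e : Polynomial K) (M : Matrix (Fin m.natDegree) (Fin m.natDegree) (Polynomial K))
    -- `W` is a suitable basis:
    (hWb : IsKxBasis W) (hrel : DerivRel D W e M) (hgcd : GcdOne e M)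
    (hesqf : Squarefree e) (hWint : ∀ i, IntegralElem σ (W i))
    -- `U` is an integral basis and `W = TU`:
    (hU : IsIntegralBasis σ U)
    (T : Matrix (Fin m.natDegree) (Fin m.natDegree) (Polynomial K))
    (hWT : ∀ i, W i = ∑ j, toA m (T i j) * U j)
    (h : AdjoinRoot m) (hc : Fin m.natDegree → Polynomial K) (d : Polynomial K)
    (hd0 : d ≠ 0) (he0 : e ≠ 0)
    -- `h = Σ (h_i/(de)) ω_i`:
    (hrep : toA m d * toA m e * h = ∑ i, toA m (hc i) * W i)
    (hde : IsCoprime d e)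
    (hhd : ∀ p : Polynomial K, p ∣ d → (∀ i, p ∣ hc i) → IsUnit p)
    (hdsqf : Squarefree d)
    -- `h = (Σ (q_i/u) ω_i)′` with `gcd(q₁,…,qₙ, u) = 1`:
    (u : Polynomial K) (q : Fin m.natDegree → Polynomial K) (hu0 : u ≠ 0)
    (hint : h = D (∑ i, toA m (q i) / toA m u * W i))
    (hqu : ∀ p : Polynomial K, p ∣ u → (∀ i, p ∣ q i) → IsUnit p) :
    u ∣ T.det ∧
      ∃ w : Polynomial K,
        Algebra.discr (RatFunc K) W =
          Algebra.discr (RatFunc K) U * algebraMap (Polynomial K) (RatFunc K) (u ^ 2 * w) := by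
  classical
  haveI : CharZero (AlgebraicClosure K) :=
    charZero_of_injective_algebraMap (algebraMap K (AlgebraicClosure K)).injective
  set F := AlgebraicClosure K with hF
  -- `toA` as a ring hom and its injectivity
  set φ : Polynomial K →+* RatFunc K := algebraMap (Polynomial K) (RatFunc K) with hφ
  set ψ : RatFunc K →+* AdjoinRoot m := algebraMap (RatFunc K) (AdjoinRoot m) with hψ
  have toA_eq : ∀ p : Polynomial K, toA m p = (ψ.comp φ) p := fun _ => rfl
  have φinj : Function.Injective φ := IsFractionRing.injective (Polynomial K) (RatFunc K)
  have toA_inj : Function.Injective (toA m) := by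
    intro p r hpr
    rw [toA_eq, toA_eq] at hpr
    exact φinj (ψ.injective hpr)
  have toA_ne : ∀ p : Polynomial K, p ≠ 0 → toA m p ≠ 0 := by
    intro p hp hp0
    exact hp (toA_inj (by rw [hp0]; exact (map_zero (ψ.comp φ)).symm))
  set g : AdjoinRoot m := ∑ i, toA m (q i) / toA m u * W i with hg
  -- `u • g = Σ qᵢ ωᵢ`
  have hug : toA m u * g = ∑ i, toA m (q i) * W i := by
    rw [hg, Finset.mul_sum]
    refine Finset.sum_congr rfl fun i _ => ?_
    rw [← mul_assoc, mul_div_cancel₀ _ (toA_ne u hu0)]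
  -- `g` is integral
  have hgint : IntegralElem σ g := by
    intro a i0
    rw [hval_eq_orderTop]
    by_contra hneg
    push_neg at hneg
    set G := (σ a).emb i0 g with hG
    have hG0 : G ≠ 0 := by
      intro h0
      rw [h0] at hneg
      simp at hneg
    set q0 : ℚ := G.isWF_support.min (HahnSeries.support_nonempty_iff.2 hG0) with hq0def
    have hot : G.orderTop = (q0 : WithTop ℚ) := HahnSeries.orderTop_of_ne_zero hG0
    have hq0 : q0 < 0 := by
      rw [hot] at hneg
      exact_mod_cast hneg
    have hc0 : G.coeff q0 ≠ 0 := G.isWF_support.min_mem _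
    have hEh : (σ a).emb i0 h = hderiv G := by rw [hint]; exact hσ a i0 g
    have hcoeff : ((σ a).emb i0 h).coeff (q0 - 1) = ((q0 : ℚ) : F) * G.coeff q0 := by
      rw [hEh]
      show ((q0 - 1 + 1 : ℚ) : F) * G.coeff (q0 - 1 + 1) = _
      rw [sub_add_cancel]
    have hcne : ((σ a).emb i0 h).coeff (q0 - 1) ≠ 0 := by
      rw [hcoeff]
      exact mul_ne_zero (Rat.cast_ne_zero.mpr (ne_of_lt hq0)) hc0
    have hEh0 : (σ a).emb i0 h ≠ 0 := by
      intro h0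
      rw [h0] at hcne
      simp at hcne
    have hle : ((σ a).emb i0 h).orderTop ≤ ((q0 - 1 : ℚ) : WithTop ℚ) :=
      HahnSeries.orderTop_le_of_coeff_ne_zero hcne
    -- lower bound from the representation of `h`
    have hrep' : (σ a).emb i0 (toA m d) * (σ a).emb i0 (toA m e) * (σ a).emb i0 h
        = ∑ j, (σ a).emb i0 (toA m (hc j)) * (σ a).emb i0 (W j) := by
      have h0 := congrArg ((σ a).emb i0) hrep
      rw [RingHom.map_mul, RingHom.map_mul] at h0
      rw [h0, map_sum ((σ a).emb i0) (fun j => toA m (hc j) * W j) Finset.univ]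
      exact Finset.sum_congr rfl fun j _ => RingHom.map_mul _ _ _
    have hlow : (0 : WithTop ℚ) ≤ ((σ a).emb i0 (toA m d) * (σ a).emb i0 (toA m e)
        * (σ a).emb i0 h).orderTop := by
      rw [hrep']
      refine le_orderTop_sum _ _ fun j _ => ?_
      refine le_trans (add_nonneg (orderTop_emb_toA_nonneg (σ a) i0 (hc j)) ?_)
        HahnSeries.orderTop_add_le_mul
      rw [← hval_eq_orderTop]
      exact hWint j a i0
    have hd0' : (σ a).emb i0 (toA m d) ≠ 0 :=
      (map_ne_zero ((σ a).emb i0)).mpr (toA_ne d hd0)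
    have he0' : (σ a).emb i0 (toA m e) ≠ 0 :=
      (map_ne_zero ((σ a).emb i0)).mpr (toA_ne e he0)
    rw [orderTop_mul' (mul_ne_zero hd0' he0') hEh0, orderTop_mul' hd0' he0'] at hlow
    have hone : ((σ a).emb i0 (toA m d)).orderTop + ((σ a).emb i0 (toA m e)).orderTop ≤ 1 :=
      orderTop_emb_add_le_one (σ a) i0 hdsqf hesqf hde
    -- extract rational values
    obtain ⟨αd, hαd⟩ : ∃ αd : ℚ, ((σ a).emb i0 (toA m d)).orderTop = (αd : WithTop ℚ) :=
      ⟨_, HahnSeries.orderTop_of_ne_zero hd0'⟩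
    obtain ⟨αe, hαe⟩ : ∃ αe : ℚ, ((σ a).emb i0 (toA m e)).orderTop = (αe : WithTop ℚ) :=
      ⟨_, HahnSeries.orderTop_of_ne_zero he0'⟩
    obtain ⟨αh, hαh⟩ : ∃ αh : ℚ, ((σ a).emb i0 h).orderTop = (αh : WithTop ℚ) :=
      ⟨_, HahnSeries.orderTop_of_ne_zero hEh0⟩
    rw [hαd, hαe, hαh] at hlow
    rw [hαd, hαe] at hone
    rw [hαh] at hle
    have h1 : (0 : ℚ) ≤ αd + αe + αh := by exact_mod_cast hlow
    have h2 : αd + αe ≤ 1 := by exact_mod_cast hone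
    have h3 : αh ≤ q0 - 1 := by exact_mod_cast hle
    linarith
  -- write `g` over the integral basis `U`
  obtain ⟨cv, hcv⟩ := hU.2.2 g hgint
  -- coefficient identity: `Σᵢ qᵢ Tᵢⱼ = u cⱼ`
  have toA_mul : ∀ p r : Polynomial K, toA m (p * r) = toA m p * toA m r := by
    intro p r
    rw [toA_eq, toA_eq, toA_eq, map_mul]
  have key1 : (∑ j, toA m (u * cv j) * U j) = ∑ j, toA m (∑ i, q i * T i j) * U j := by
    have l1 : (∑ j, toA m (u * cv j) * U j) = toA m u * g := by
      rw [hcv, Finset.mul_sum]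
      exact Finset.sum_congr rfl fun j _ => by rw [toA_mul, mul_assoc]
    have l2 : (∑ j, toA m (∑ i, q i * T i j) * U j) = ∑ i, toA m (q i) * W i := by
      have hexp : ∀ j, toA m (∑ i, q i * T i j) = ∑ i, toA m (q i) * toA m (T i j) := by
        intro j
        rw [toA_eq, map_sum (ψ.comp φ) (fun i => q i * T i j) Finset.univ]
        exact Finset.sum_congr rfl fun i _ => by
          rw [RingHom.map_mul, ← toA_eq, ← toA_eq]
      calc ∑ j, toA m (∑ i, q i * T i j) * U j
          = ∑ j, ∑ i, toA m (q i) * toA m (T i j) * U j := by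
            refine Finset.sum_congr rfl fun j _ => ?_
            rw [hexp j, Finset.sum_mul]
        _ = ∑ i, ∑ j, toA m (q i) * toA m (T i j) * U j := Finset.sum_comm
        _ = ∑ i, toA m (q i) * W i := by
            refine Finset.sum_congr rfl fun i _ => ?_
            rw [hWT i, Finset.mul_sum]
            exact Finset.sum_congr rfl fun j _ => (mul_assoc _ _ _)
    rw [l1, l2, hug]
  have peq : ∀ j, ∑ i, q i * T i j = u * cv j := by
    have hli := hU.1.1
    have hsum : ∑ j, (φ (u * cv j) - φ (∑ i, q i * T i j)) • U j = 0 := by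
      have hterm : ∀ j, (φ (u * cv j) - φ (∑ i, q i * T i j)) • U j
          = toA m (u * cv j) * U j - toA m (∑ i, q i * T i j) * U j := by
        intro j
        rw [sub_smul, Algebra.smul_def, Algebra.smul_def]
        rfl
      rw [Finset.sum_congr rfl fun j _ => hterm j, Finset.sum_sub_distrib, key1, sub_self]
    have hz := (Fintype.linearIndependent_iff.mp hli) _ hsum
    intro j
    have hj : φ (u * cv j) = φ (∑ i, q i * T i j) := sub_eq_zero.mp (hz j)
    exact (φinj hj).symm
  -- matrix manipulation: `det T · qᵢ = u · (…)`
  have hdvd : ∀ i, u ∣ T.det * q i := by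
    intro i
    have hTadj : ∀ k, (∑ j, T k j * T.adjugate j i) = T.det * (if k = i then 1 else 0) := by
      intro k
      have hk := congrFun (congrFun (Matrix.mul_adjugate T) k) i
      simpa [Matrix.mul_apply, Matrix.one_apply, Matrix.smul_apply, smul_eq_mul] using hk
    have expand : T.det * q i = ∑ j, (∑ k, q k * T k j) * T.adjugate j i := by
      calc T.det * q i
          = ∑ k, q k * (T.det * (if k = i then 1 else 0)) := by
            simp only [mul_ite, mul_one, mul_zero]
            rw [Finset.sum_ite_eq' Finset.univ i (fun k => q k * T.det)]
            simp [mul_comm]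
        _ = ∑ k, q k * ∑ j, T k j * T.adjugate j i := by
            refine Finset.sum_congr rfl fun k _ => ?_
            rw [hTadj k]
        _ = ∑ k, ∑ j, q k * (T k j * T.adjugate j i) := by
            refine Finset.sum_congr rfl fun k _ => Finset.mul_sum _ _ _
        _ = ∑ j, ∑ k, q k * (T k j * T.adjugate j i) := Finset.sum_comm
        _ = ∑ j, (∑ k, q k * T k j) * T.adjugate j i := by
            refine Finset.sum_congr rfl fun j _ => ?_
            rw [Finset.sum_mul]
            exact Finset.sum_congr rfl fun k _ => by ring
    rw [expand]
    have hterm : ∀ j, (∑ k, q k * T k j) * T.adjugate j i = u * (cv j * T.adjugate j i) := by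
      intro j
      rw [peq j]
      ring
    rw [Finset.sum_congr rfl fun j _ => hterm j, ← Finset.mul_sum]
    exact ⟨_, rfl⟩
  -- gcd argument: `u ∣ det T`
  have hudet : u ∣ T.det := by
    have hdvd2 : u ∣ Finset.univ.gcd (fun i => T.det * q i) :=
      Finset.dvd_gcd fun i _ => hdvd i
    rw [Finset.gcd_mul_left] at hdvd2
    have hcop : IsCoprime u (Finset.univ.gcd q) := by
      rw [← EuclideanDomain.gcd_isUnit_iff]
      apply hqu
      · exact EuclideanDomain.gcd_dvd_left _ _
      · intro i
        exact dvd_trans (EuclideanDomain.gcd_dvd_right _ _) (Finset.gcd_dvd (Finset.mem_univ i))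
    have := hcop.dvd_of_dvd_mul_right hdvd2
    exact dvd_trans this (normalize_associated T.det).dvd
  refine ⟨hudet, ?_⟩
  -- discriminant relation
  obtain ⟨v, hv⟩ := hudet
  have hWU : W = Matrix.mulVec ((T.map φ).map (algebraMap (RatFunc K) (AdjoinRoot m))) U := by
    funext i
    rw [hWT i]
    rfl
  have hdiscr := Algebra.discr_of_matrix_mulVec (A := RatFunc K) (B := AdjoinRoot m) U (T.map φ)
  rw [← hWU] at hdiscr
  refine ⟨v ^ 2, ?_⟩
  rw [hdiscr]
  have hdet : (T.map φ).det = φ T.det := (RingHom.map_det φ T).symm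
  rw [hdet, hv]
  rw [map_mul, map_mul, map_pow, map_pow]
  ring
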